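/- Let J be any coupling of probability measures P₀ and P₁ on ℝ, each with finite second moment, with quantile functions F₀⁻¹, F₁⁻¹. Then ∫ y₀ y₁ dJ(y₀, y₁) ≤ ∫₀¹ F₀⁻¹(u) F₁⁻¹(u) du, and equality holds when J is the comonotone coupling, i.e. the pushforward of Lebesgue measure on (0,1) under u ↦ (F₀⁻¹(u), F₁⁻¹(u)). -/

import Mathlib

open MeasureTheory Set Filter

/-- The cumulative distribution function of a measure on ℝ. -/
noncomputable def cdf (P : MeasureTheory.Measure ℝ) (y : ℝ) : ℝ := (P (Set.Iic y)).toReal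

/-- The quantile function (generalized inverse cdf) of a measure on ℝ. -/
noncomputable def quantile (P : MeasureTheory.Measure ℝ) (u : ℝ) : ℝ :=
  sInf {y : ℝ | u ≤ cdf P y}

open scoped Topology

lemma cdf_eq (P : Measure ℝ) [IsProbabilityMeasure P] : cdf P = ProbabilityTheory.cdf P := by
  funext y; rw [ProbabilityTheory.cdf_eq_real]; rfl

lemma quantile_set_nonempty (P : Measure ℝ) [IsProbabilityMeasure P] {u : ℝ} (hu : u < 1) :
    {y : ℝ | u ≤ cdf P y}.Nonempty := by
  rw [cdf_eq]
  obtain ⟨y, hy⟩ := ((ProbabilityTheory.tendsto_cdf_atTop P).eventually (eventually_ge_nhds hu)).exists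
  exact ⟨y, hy⟩

lemma quantile_set_bddBelow (P : Measure ℝ) [IsProbabilityMeasure P] {u : ℝ} (hu : 0 < u) :
    BddBelow {y : ℝ | u ≤ cdf P y} := by
  rw [cdf_eq]
  obtain ⟨y0, hy0⟩ := ((ProbabilityTheory.tendsto_cdf_atBot P).eventually_lt_const hu).exists
  refine ⟨y0, fun z hz => ?_⟩
  by_contra hlt
  push_neg at hlt
  exact absurd (le_trans hz (ProbabilityTheory.monotone_cdf P hlt.le)) (not_le.2 hy0)

lemma le_cdf_quantile (P : Measure ℝ) [IsProbabilityMeasure P] {u : ℝ} (hu : u ∈ Ioo (0:ℝ) 1) :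
    u ≤ cdf P (quantile P u) := by
  have hne := quantile_set_nonempty P hu.2
  have hbdd := quantile_set_bddBelow P hu.1
  set q := quantile P u with hq
  obtain ⟨seq, hmono, hlim, hmem⟩ := exists_seq_tendsto_sInf hne hbdd
  simp only [mem_setOf_eq, cdf_eq] at hmem
  rw [cdf_eq]
  have hcont : ContinuousWithinAt (ProbabilityTheory.cdf P) (Ici q) q :=
    (ProbabilityTheory.cdf P).right_continuous q
  have hseq : Tendsto (fun n => ProbabilityTheory.cdf P (seq n)) atTop
      (𝓝 (ProbabilityTheory.cdf P q)) := by
    refine hcont.tendsto.comp (tendsto_nhdsWithin_iff.2 ⟨hlim, Eventually.of_forall fun n => ?_⟩)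
    exact csInf_le hbdd (by simpa [cdf_eq] using hmem n)
  exact ge_of_tendsto hseq (Eventually.of_forall fun n => hmem n)

lemma quantile_le_iff (P : Measure ℝ) [IsProbabilityMeasure P] {u y : ℝ} (hu : u ∈ Ioo (0:ℝ) 1) :
    quantile P u ≤ y ↔ u ≤ cdf P y := by
  constructor
  · intro h
    exact le_trans (le_cdf_quantile P hu) (by rw [cdf_eq]; exact ProbabilityTheory.monotone_cdf P h)
  · intro h
    exact csInf_le (quantile_set_bddBelow P hu.1) h

lemma lt_quantile_iff (P : Measure ℝ) [IsProbabilityMeasure P] {u y : ℝ} (hu : u ∈ Ioo (0:ℝ) 1) :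
    y < quantile P u ↔ cdf P y < u := by
  rw [← not_le, ← not_le, quantile_le_iff P hu]

lemma quantile_monotoneOn (P : Measure ℝ) [IsProbabilityMeasure P] :
    MonotoneOn (quantile P) (Ioo (0:ℝ) 1) := by
  intro u hu v hv huv
  refine le_csInf (quantile_set_nonempty P hv.2) fun y hy => ?_
  exact csInf_le (quantile_set_bddBelow P hu.1) (le_trans huv hy)

lemma quantile_aemeasurable (P : Measure ℝ) [IsProbabilityMeasure P] :
    AEMeasurable (quantile P) (volume.restrict (Ioo (0:ℝ) 1)) :=
  aemeasurable_restrict_of_monotoneOn measurableSet_Ioo (quantile_monotoneOn P)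

lemma map_quantile (P : Measure ℝ) [IsProbabilityMeasure P] :
    (volume.restrict (Ioo (0:ℝ) 1)).map (quantile P) = P := by
  have hvol : IsProbabilityMeasure (volume.restrict (Ioo (0:ℝ) 1)) := by
    constructor
    simp [Real.volume_Ioo]
  have hprob : IsProbabilityMeasure ((volume.restrict (Ioo (0:ℝ) 1)).map (quantile P)) :=
    Measure.isProbabilityMeasure_map (quantile_aemeasurable P)
  refine Measure.ext_of_Iic _ _ fun y => ?_
  rw [Measure.map_apply_of_aemeasurable (quantile_aemeasurable P) measurableSet_Iic,
    Measure.restrict_apply' measurableSet_Ioo]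
  have hc0 : 0 ≤ cdf P y := ENNReal.toReal_nonneg
  have hc1 : cdf P y ≤ 1 := by
    rw [cdf_eq]; exact ProbabilityTheory.cdf_le_one P y
  have hset : quantile P ⁻¹' Iic y ∩ Ioo 0 1 = Iic (cdf P y) ∩ Ioo 0 1 := by
    ext u
    simp only [mem_inter_iff, mem_preimage, mem_Iic, and_congr_left_iff]
    intro hu
    exact quantile_le_iff P hu
  rw [hset]
  have hP : P (Iic y) = ENNReal.ofReal (cdf P y) := by
    rw [cdf_eq, ProbabilityTheory.ofReal_cdf]
  rw [hP]
  rcases lt_or_ge (cdf P y) 1 with h | h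
  · have : Iic (cdf P y) ∩ Ioo (0:ℝ) 1 = Ioc 0 (cdf P y) := by
      ext u; simp only [mem_inter_iff, mem_Iic, mem_Ioo, mem_Ioc]
      constructor
      · rintro ⟨h1, h2, h3⟩; exact ⟨h2, h1⟩
      · rintro ⟨h1, h2⟩; exact ⟨h2, h1, lt_of_le_of_lt h2 h⟩
    rw [this, Real.volume_Ioc, sub_zero]
  · have h1 : cdf P y = 1 := le_antisymm hc1 h
    have : Iic (cdf P y) ∩ Ioo (0:ℝ) 1 = Ioo 0 1 := by
      rw [h1]
      ext u; simp only [mem_inter_iff, mem_Iic, mem_Ioo]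
      exact ⟨fun h => h.2, fun h => ⟨h.2.le, h⟩⟩
    rw [this, h1, Real.volume_Ioo]
    norm_num

/-- Kernel for the Hoeffding representation: `h x s = 1{s < x} - 1{s < 0}`. -/
noncomputable def hk (x s : ℝ) : ℝ := (if s < x then 1 else 0) - (if s < 0 then 1 else 0)

lemma hk_eq_indicator (x : ℝ) :
    hk x = fun s => (Ico (0:ℝ) x).indicator 1 s - (Ico x 0).indicator 1 s := by
  funext s
  simp only [hk, indicator, mem_Ico, Pi.one_apply]
  by_cases h1 : s < x <;> by_cases h2 : s < 0 <;> by_cases h3 : 0 ≤ s <;> by_cases h4 : x ≤ s <;>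
    simp [h1, h2, h3, h4] <;> linarith

lemma measurable_hk : Measurable (fun z : ℝ × ℝ => hk z.1 z.2) := by
  unfold hk
  refine Measurable.sub ?_ ?_
  · exact Measurable.ite (measurableSet_lt measurable_snd measurable_fst) measurable_const
      measurable_const
  · exact Measurable.ite (measurableSet_lt measurable_snd measurable_const) measurable_const
      measurable_const

lemma integrable_indicator_Ico (a b : ℝ) :
    Integrable ((Ico a b).indicator (1 : ℝ → ℝ)) (volume : Measure ℝ) := by
  rw [integrable_indicator_iff measurableSet_Ico]
  exact integrableOn_const (by rw [Real.volume_Ico]; exact ENNReal.ofReal_ne_top)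

lemma integrable_hk (x : ℝ) : Integrable (hk x) (volume : Measure ℝ) := by
  rw [hk_eq_indicator]
  exact (integrable_indicator_Ico 0 x).sub (integrable_indicator_Ico x 0)

lemma integral_indicator_Ico (a b : ℝ) :
    ∫ s, (Ico a b).indicator (1 : ℝ → ℝ) s = max (b - a) 0 := by
  rw [integral_indicator measurableSet_Ico]
  simp only [Pi.one_apply, integral_const, smul_eq_mul, mul_one,
    Measure.restrict_apply_univ, Real.volume_Ico]
  rw [measureReal_def, Measure.restrict_apply_univ, Real.volume_Ico]
  rcases le_total b a with h | h
  · rw [ENNReal.ofReal_eq_zero.2 (by linarith), max_eq_right (by linarith)]; simp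
  · rw [ENNReal.toReal_ofReal (by linarith), max_eq_left (by linarith)]

lemma integral_hk (x : ℝ) : ∫ s, hk x s = x := by
  rw [hk_eq_indicator]
  rw [integral_sub (integrable_indicator_Ico 0 x) (integrable_indicator_Ico x 0),
    integral_indicator_Ico, integral_indicator_Ico]
  rcases le_total 0 x with h | h
  · rw [max_eq_left (by linarith), max_eq_right (by linarith)]; ring
  · rw [max_eq_right (by linarith), max_eq_left (by linarith)]; ring

lemma abs_hk_le (x s : ℝ) : |hk x s| ≤ (Ico (0:ℝ) x).indicator 1 s + (Ico x 0).indicator 1 s := by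
  rw [hk_eq_indicator]
  refine (abs_sub _ _).trans ?_
  gcongr <;> simp [indicator, apply_ite abs]

lemma integral_abs_hk (x : ℝ) : ∫ s, |hk x s| = |x| := by
  have h1 : ∀ s, |hk x s| = (Ico (0:ℝ) x).indicator 1 s + (Ico x 0).indicator 1 s := by
    intro s
    simp only [hk, indicator, mem_Ico, Pi.one_apply]
    by_cases h1 : s < x <;> by_cases h2 : s < 0 <;> by_cases h3 : 0 ≤ s <;> by_cases h4 : x ≤ s <;>
      simp [h1, h2, h3, h4, abs_of_nonneg, abs_of_nonpos] <;> linarith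
  simp only [h1]
  rw [integral_add (integrable_indicator_Ico 0 x) (integrable_indicator_Ico x 0),
    integral_indicator_Ico, integral_indicator_Ico]
  rcases le_total 0 x with h | h
  · rw [max_eq_left (by linarith), max_eq_right (by linarith), abs_of_nonneg h]; ring
  · rw [max_eq_right (by linarith), max_eq_left (by linarith), abs_of_nonpos h]; ring

set_option linter.unusedSectionVars false
section Coupling

variable {P0 P1 : Measure ℝ} [IsProbabilityMeasure P0] [IsProbabilityMeasure P1]
variable {K : Measure (ℝ × ℝ)} [IsProbabilityMeasure K]

lemma integrable_sq_fst (hm0 : Integrable (fun y : ℝ => y ^ 2) P0)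
    (h0 : K.map Prod.fst = P0) : Integrable (fun p : ℝ × ℝ => p.1 ^ 2) K := by
  rw [← h0] at hm0
  exact (integrable_map_measure (by fun_prop) measurable_fst.aemeasurable).1 hm0

lemma integrable_sq_snd (hm1 : Integrable (fun y : ℝ => y ^ 2) P1)
    (h1 : K.map Prod.snd = P1) : Integrable (fun p : ℝ × ℝ => p.2 ^ 2) K := by
  rw [← h1] at hm1
  exact (integrable_map_measure (by fun_prop) measurable_snd.aemeasurable).1 hm1

lemma integrable_abs_mul (hm0 : Integrable (fun y : ℝ => y ^ 2) P0)
    (hm1 : Integrable (fun y : ℝ => y ^ 2) P1)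
    (h0 : K.map Prod.fst = P0) (h1 : K.map Prod.snd = P1) :
    Integrable (fun p : ℝ × ℝ => |p.1| * |p.2|) K := by
  have hi : Integrable (fun p : ℝ × ℝ => (p.1 ^ 2 + p.2 ^ 2) / 2) K :=
    ((integrable_sq_fst hm0 h0).add (integrable_sq_snd hm1 h1)).div_const 2
  refine hi.mono' ((measurable_fst.abs.mul measurable_snd.abs).aestronglyMeasurable)
    (Eventually.of_forall fun p => ?_)
  rw [Real.norm_eq_abs, abs_of_nonneg (mul_nonneg (abs_nonneg _) (abs_nonneg _))]
  nlinarith [sq_nonneg (|p.1| - |p.2|), abs_nonneg p.1, abs_nonneg p.2, sq_abs p.1, sq_abs p.2]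

lemma measurable_F : Measurable (fun z : (ℝ × ℝ) × (ℝ × ℝ) => hk z.1.1 z.2.1 * hk z.1.2 z.2.2) := by
  have h1 : Measurable (fun z : (ℝ × ℝ) × (ℝ × ℝ) => hk z.1.1 z.2.1) :=
    measurable_hk.comp ((measurable_fst.comp measurable_fst).prodMk
      (measurable_fst.comp measurable_snd))
  have h2 : Measurable (fun z : (ℝ × ℝ) × (ℝ × ℝ) => hk z.1.2 z.2.2) :=
    measurable_hk.comp ((measurable_snd.comp measurable_fst).prodMk
      (measurable_snd.comp measurable_snd))
  exact h1.mul h2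

lemma integrable_F (hm0 : Integrable (fun y : ℝ => y ^ 2) P0)
    (hm1 : Integrable (fun y : ℝ => y ^ 2) P1)
    (h0 : K.map Prod.fst = P0) (h1 : K.map Prod.snd = P1) :
    Integrable (fun z : (ℝ × ℝ) × (ℝ × ℝ) => hk z.1.1 z.2.1 * hk z.1.2 z.2.2)
      (K.prod (volume : Measure (ℝ × ℝ))) := by
  rw [integrable_prod_iff measurable_F.aestronglyMeasurable]
  constructor
  · refine Eventually.of_forall fun p => ?_
    rw [Measure.volume_eq_prod]
    exact (integrable_hk p.1).mul_prod (integrable_hk p.2)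
  · have heval : ∀ p : ℝ × ℝ,
        (∫ q : ℝ × ℝ, ‖hk p.1 q.1 * hk p.2 q.2‖) = |p.1| * |p.2| := by
      intro p
      rw [Measure.volume_eq_prod]
      have : ∀ q : ℝ × ℝ, ‖hk p.1 q.1 * hk p.2 q.2‖ = |hk p.1 q.1| * |hk p.2 q.2| := fun q => by
        rw [Real.norm_eq_abs, abs_mul]
      simp_rw [this]
      rw [integral_prod_mul (fun s => |hk p.1 s|) (fun t => |hk p.2 t|), integral_abs_hk,
        integral_abs_hk]
    simp_rw [heval]
    exact integrable_abs_mul hm0 hm1 h0 h1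

lemma cross_eq (hm0 : Integrable (fun y : ℝ => y ^ 2) P0)
    (hm1 : Integrable (fun y : ℝ => y ^ 2) P1)
    (h0 : K.map Prod.fst = P0) (h1 : K.map Prod.snd = P1) :
    (∫ p : ℝ × ℝ, p.1 * p.2 ∂K) =
      ∫ q : ℝ × ℝ, (∫ p : ℝ × ℝ, hk p.1 q.1 * hk p.2 q.2 ∂K) := by
  have hswap := integral_integral_swap (f := fun (p : ℝ × ℝ) (q : ℝ × ℝ) =>
    hk p.1 q.1 * hk p.2 q.2) (μ := K) (ν := (volume : Measure (ℝ × ℝ)))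
    (integrable_F hm0 hm1 h0 h1)
  rw [← hswap]
  refine integral_congr_ae (Eventually.of_forall fun p => ?_)
  show p.1 * p.2 = ∫ q : ℝ × ℝ, hk p.1 q.1 * hk p.2 q.2 ∂((volume : Measure ℝ).prod volume)
  rw [integral_prod_mul (fun s => hk p.1 s) (fun t => hk p.2 t), integral_hk, integral_hk]

lemma integrable_g (hm0 : Integrable (fun y : ℝ => y ^ 2) P0)
    (hm1 : Integrable (fun y : ℝ => y ^ 2) P1)
    (h0 : K.map Prod.fst = P0) (h1 : K.map Prod.snd = P1) :
    Integrable (fun q : ℝ × ℝ => ∫ p : ℝ × ℝ, hk p.1 q.1 * hk p.2 q.2 ∂K)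
      (volume : Measure (ℝ × ℝ)) := by
  have := ((integrable_F hm0 hm1 h0 h1).swap).integral_prod_left
  exact this

lemma meas_S (q : ℝ × ℝ) : MeasurableSet {p : ℝ × ℝ | q.1 < p.1 ∧ q.2 < p.2} :=
  (measurableSet_lt measurable_const measurable_fst).inter
    (measurableSet_lt measurable_const measurable_snd)

lemma g_eval (h0 : K.map Prod.fst = P0) (h1 : K.map Prod.snd = P1) (q : ℝ × ℝ) :
    (∫ p : ℝ × ℝ, hk p.1 q.1 * hk p.2 q.2 ∂K) =
      (K {p : ℝ × ℝ | q.1 < p.1 ∧ q.2 < p.2}).toReal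
      - (if q.2 < 0 then (P0 (Ioi q.1)).toReal else 0)
      - (if q.1 < 0 then (P1 (Ioi q.2)).toReal else 0)
      + (if q.1 < 0 then (1:ℝ) else 0) * (if q.2 < 0 then (1:ℝ) else 0) := by
  set b : ℝ := if q.1 < 0 then 1 else 0 with hb
  set e : ℝ := if q.2 < 0 then 1 else 0 with he
  set A : ℝ × ℝ → ℝ := fun p => if q.1 < p.1 then 1 else 0 with hA
  set D : ℝ × ℝ → ℝ := fun p => if q.2 < p.2 then 1 else 0 with hD
  have hADind : (fun p : ℝ × ℝ => A p * D p) =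
      ({p : ℝ × ℝ | q.1 < p.1 ∧ q.2 < p.2}).indicator 1 := by
    funext p
    by_cases h1' : q.1 < p.1 <;> by_cases h2' : q.2 < p.2 <;>
      simp [hA, hD, indicator, h1', h2']
  have hAind : A = ({p : ℝ × ℝ | q.1 < p.1}).indicator 1 := by
    funext p; by_cases h1' : q.1 < p.1 <;> simp [hA, indicator, h1']
  have hDind : D = ({p : ℝ × ℝ | q.2 < p.2}).indicator 1 := by
    funext p; by_cases h2' : q.2 < p.2 <;> simp [hD, indicator, h2']
  have hmA : MeasurableSet {p : ℝ × ℝ | q.1 < p.1} :=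
    measurableSet_lt measurable_const measurable_fst
  have hmD : MeasurableSet {p : ℝ × ℝ | q.2 < p.2} :=
    measurableSet_lt measurable_const measurable_snd
  have hiAD : Integrable (fun p => A p * D p) K := by
    rw [hADind]; exact (integrable_const (1:ℝ)).indicator (meas_S q)
  have hiA : Integrable A K := by
    rw [hAind]; exact (integrable_const (1:ℝ)).indicator hmA
  have hiD : Integrable D K := by
    rw [hDind]; exact (integrable_const (1:ℝ)).indicator hmD
  have hexp : ∀ p : ℝ × ℝ, hk p.1 q.1 * hk p.2 q.2 = A p * D p - e * A p - b * D p + b * e := by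
    intro p
    simp only [hk, hA, hD, hb, he]
    ring
  simp_rw [hexp]
  have i1 : Integrable (fun p : ℝ × ℝ => A p * D p - e * A p) K := hiAD.sub (hiA.const_mul e)
  have i2 : Integrable (fun p : ℝ × ℝ => A p * D p - e * A p - b * D p) K :=
    i1.sub (hiD.const_mul b)
  rw [integral_add i2 (integrable_const (b * e)),
    integral_sub i1 (hiD.const_mul b),
    integral_sub hiAD (hiA.const_mul e), integral_const_mul, integral_const_mul, integral_const,
    hADind, integral_indicator_one (meas_S q), hAind, integral_indicator_one hmA, hDind,
    integral_indicator_one hmD]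
  simp only [measureReal_def]
  have hKA : K {p : ℝ × ℝ | q.1 < p.1} = P0 (Ioi q.1) := by
    rw [← h0, Measure.map_apply measurable_fst measurableSet_Ioi]; rfl
  have hKD : K {p : ℝ × ℝ | q.2 < p.2} = P1 (Ioi q.2) := by
    rw [← h1, Measure.map_apply measurable_snd measurableSet_Ioi]; rfl
  rw [hKA, hKD]
  simp only [measure_univ, ENNReal.toReal_one, smul_eq_mul, mul_one]
  by_cases hq1 : q.1 < 0 <;> by_cases hq2 : q.2 < 0 <;> simp [hb, he, hq1, hq2] <;> ring

end Coupling

section Comonotone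

variable (P0 P1 : Measure ℝ) [IsProbabilityMeasure P0] [IsProbabilityMeasure P1]

noncomputable def como : Measure (ℝ × ℝ) :=
  (volume.restrict (Ioo (0:ℝ) 1)).map (fun u => (quantile P0 u, quantile P1 u))

lemma aemeasurable_pair :
    AEMeasurable (fun u => (quantile P0 u, quantile P1 u)) (volume.restrict (Ioo (0:ℝ) 1)) :=
  (quantile_aemeasurable P0).prodMk (quantile_aemeasurable P1)

instance : IsProbabilityMeasure (como P0 P1) := by
  have hvol : IsProbabilityMeasure (volume.restrict (Ioo (0:ℝ) 1)) := by
    constructor; simp [Real.volume_Ioo]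
  exact Measure.isProbabilityMeasure_map (aemeasurable_pair P0 P1)

lemma como_fst : (como P0 P1).map Prod.fst = P0 := by
  rw [como, AEMeasurable.map_map_of_aemeasurable measurable_fst.aemeasurable (aemeasurable_pair P0 P1)]
  exact map_quantile P0

lemma como_snd : (como P0 P1).map Prod.snd = P1 := by
  rw [como, AEMeasurable.map_map_of_aemeasurable measurable_snd.aemeasurable (aemeasurable_pair P0 P1)]
  exact map_quantile P1

lemma como_S (q : ℝ × ℝ) :
    como P0 P1 {p : ℝ × ℝ | q.1 < p.1 ∧ q.2 < p.2} = min (P0 (Ioi q.1)) (P1 (Ioi q.2)) := by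
  have hmap := Measure.map_apply_of_aemeasurable (aemeasurable_pair P0 P1) (meas_S q)
  rw [como, hmap, Measure.restrict_apply' measurableSet_Ioo]
  have hset : (fun u => (quantile P0 u, quantile P1 u)) ⁻¹' {p : ℝ × ℝ | q.1 < p.1 ∧ q.2 < p.2}
      ∩ Ioo 0 1 = (Ioi (cdf P0 q.1) ∩ Ioo 0 1) ∩ (Ioi (cdf P1 q.2) ∩ Ioo 0 1) := by
    ext u
    simp only [mem_inter_iff, mem_preimage, mem_setOf_eq, mem_Ioi, mem_Ioo]
    constructor
    · rintro ⟨⟨ha, hb⟩, hu⟩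
      exact ⟨⟨(lt_quantile_iff P0 hu).1 ha, hu⟩, (lt_quantile_iff P1 hu).1 hb, hu⟩
    · rintro ⟨⟨ha, hu⟩, hb, _⟩
      exact ⟨⟨(lt_quantile_iff P0 hu).2 ha, (lt_quantile_iff P1 hu).2 hb⟩, hu⟩
  have hside : ∀ (P : Measure ℝ) [IsProbabilityMeasure P] (s : ℝ),
      volume (Ioi (cdf P s) ∩ Ioo 0 1) = P (Ioi s) := by
    intro P hP s
    have := map_quantile P
    nth_rewrite 2 [← this]
    rw [Measure.map_apply_of_aemeasurable (quantile_aemeasurable P) measurableSet_Ioi,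
      Measure.restrict_apply' measurableSet_Ioo]
    congr 1
    ext u
    simp only [mem_inter_iff, mem_preimage, mem_Ioi, mem_Ioo, and_congr_left_iff]
    intro hu
    exact (lt_quantile_iff P hu).symm
  rw [hset]
  rcases le_total (cdf P0 q.1) (cdf P1 q.2) with h | h
  · have hsub : Ioi (cdf P1 q.2) ∩ Ioo (0:ℝ) 1 ⊆ Ioi (cdf P0 q.1) ∩ Ioo 0 1 :=
      inter_subset_inter (Ioi_subset_Ioi h) le_rfl
    rw [inter_eq_self_of_subset_right hsub, hside P1 q.2,
      min_eq_right (by rw [← hside P0 q.1, ← hside P1 q.2]; exact measure_mono hsub)]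
  · have hsub : Ioi (cdf P0 q.1) ∩ Ioo (0:ℝ) 1 ⊆ Ioi (cdf P1 q.2) ∩ Ioo 0 1 :=
      inter_subset_inter (Ioi_subset_Ioi h) le_rfl
    rw [inter_eq_self_of_subset_left hsub, hside P0 q.1,
      min_eq_left (by rw [← hside P0 q.1, ← hside P1 q.2]; exact measure_mono hsub)]

end Comonotone

lemma como_integral (P0 P1 : Measure ℝ) [IsProbabilityMeasure P0] [IsProbabilityMeasure P1] :
    (∫ p : ℝ × ℝ, p.1 * p.2 ∂(como P0 P1)) =
      ∫ u in Ioo (0:ℝ) 1, quantile P0 u * quantile P1 u := by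
  rw [como, integral_map (f := fun p : ℝ × ℝ => p.1 * p.2) (aemeasurable_pair P0 P1)
    (measurable_fst.mul measurable_snd).aestronglyMeasurable]

/-- Upper Fréchet–Hoeffding bound on the cross moment; attained by the comonotone coupling. -/
theorem cross_moment_upper_bound
    (P0 P1 : Measure ℝ) [IsProbabilityMeasure P0] [IsProbabilityMeasure P1]
    (hm0 : Integrable (fun y : ℝ => y ^ 2) P0) (hm1 : Integrable (fun y : ℝ => y ^ 2) P1)
    (J : Measure (ℝ × ℝ)) [IsProbabilityMeasure J]
    (h0 : J.map Prod.fst = P0) (h1 : J.map Prod.snd = P1) :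
    ((∫ p : ℝ × ℝ, p.1 * p.2 ∂J) ≤ ∫ u in Ioo (0:ℝ) 1, quantile P0 u * quantile P1 u) ∧
    (J = (volume.restrict (Ioo (0:ℝ) 1)).map (fun u => (quantile P0 u, quantile P1 u)) →
      (∫ p : ℝ × ℝ, p.1 * p.2 ∂J) = ∫ u in Ioo (0:ℝ) 1, quantile P0 u * quantile P1 u) := by
  have hCfst := como_fst P0 P1
  have hCsnd := como_snd P0 P1
  constructor
  · rw [cross_eq hm0 hm1 h0 h1, ← como_integral P0 P1, cross_eq hm0 hm1 hCfst hCsnd]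
    refine integral_mono (integrable_g hm0 hm1 h0 h1) (integrable_g hm0 hm1 hCfst hCsnd)
      fun q => ?_
    rw [g_eval h0 h1 q, g_eval hCfst hCsnd q]
    have hle : J {p : ℝ × ℝ | q.1 < p.1 ∧ q.2 < p.2} ≤
        como P0 P1 {p : ℝ × ℝ | q.1 < p.1 ∧ q.2 < p.2} := by
      rw [como_S P0 P1 q]
      refine le_min ?_ ?_
      · rw [← h0, Measure.map_apply measurable_fst measurableSet_Ioi]
        exact measure_mono fun p hp => hp.1
      · rw [← h1, Measure.map_apply measurable_snd measurableSet_Ioi]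
        exact measure_mono fun p hp => hp.2
    have := ENNReal.toReal_mono (measure_ne_top _ _) hle
    gcongr
  · intro hJ
    rw [hJ, ← como, como_integral P0 P1]
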